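/- Let V be a finite-dimensional complex normed vector space and let h be an invertible linear map on V all of whose eigenvalues have modulus 1. If the set {‖h^n‖ : n ∈ ℤ} of operator norms is unbounded, then there exists c > 0 such that ‖h^n‖ ≥ c n for every n ∈ ℕ. -/

import Mathlib

open Module

private lemma unit_pow_eigen {V : Type*} [NormedAddCommGroup V] [NormedSpace ℂ V]
    (u : (V →L[ℂ] V)ˣ) {μ : ℂ} {x : V} (hx : (u : V →L[ℂ] V) x = μ • x) :
    ∀ n : ℕ, ((u ^ n : (V →L[ℂ] V)ˣ) : V →L[ℂ] V) x = μ ^ n • x := by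
  intro n
  induction n with
  | zero => simp
  | succ k ih =>
    rw [pow_succ, Units.val_mul, ContinuousLinearMap.mul_apply, hx, map_smul, ih,
      smul_smul, mul_comm, ← pow_succ]

private lemma unit_inv_eigen {V : Type*} [NormedAddCommGroup V] [NormedSpace ℂ V]
    (u : (V →L[ℂ] V)ˣ) {μ : ℂ} {x : V} (hμ : μ ≠ 0) (hx : (u : V →L[ℂ] V) x = μ • x) :
    ((u⁻¹ : (V →L[ℂ] V)ˣ) : V →L[ℂ] V) x = μ⁻¹ • x := by
  have h1 : ((u⁻¹ : (V →L[ℂ] V)ˣ) : V →L[ℂ] V) ((u : V →L[ℂ] V) x) = x := by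
    rw [← ContinuousLinearMap.mul_apply, ← Units.val_mul, inv_mul_cancel, Units.val_one,
      ContinuousLinearMap.one_apply]
  rw [hx, map_smul] at h1
  have h2 := congrArg (fun y => μ⁻¹ • y) h1
  simp only [smul_smul, inv_mul_cancel₀ hμ, one_smul] at h2
  exact h2

private lemma unit_zpow_eigen {V : Type*} [NormedAddCommGroup V] [NormedSpace ℂ V]
    (u : (V →L[ℂ] V)ˣ) {μ : ℂ} {x : V} (hμ : μ ≠ 0) (hx : (u : V →L[ℂ] V) x = μ • x) :
    ∀ n : ℤ, ((u ^ n : (V →L[ℂ] V)ˣ) : V →L[ℂ] V) x = μ ^ n • x := by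
  intro n
  cases n with
  | ofNat m => simpa using unit_pow_eigen u hx m
  | negSucc m =>
    rw [zpow_negSucc, zpow_negSucc, ← inv_pow, ← inv_pow]
    exact unit_pow_eigen u⁻¹ (unit_inv_eigen u hμ hx) (m + 1)

theorem quasiUnipotent_unbounded_linear_growth
    {V : Type*} [NormedAddCommGroup V] [NormedSpace ℂ V] [FiniteDimensional ℂ V]
    (h : (V →L[ℂ] V)ˣ)
    (heig : ∀ μ : ℂ,
      Module.End.HasEigenvalue ((h : V →L[ℂ] V) : V →ₗ[ℂ] V) μ → ‖μ‖ = 1)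
    (hub : ¬ BddAbove
      (Set.range fun n : ℤ => ‖((h ^ n : (V →L[ℂ] V)ˣ) : V →L[ℂ] V)‖)) :
    ∃ c : ℝ, 0 < c ∧ ∀ n : ℕ, 1 ≤ n →
      c * n ≤ ‖((h ^ (n : ℤ) : (V →L[ℂ] V)ˣ) : V →L[ℂ] V)‖ := by
  set f : V →L[ℂ] V := (h : V →L[ℂ] V) with hf
  set e : End ℂ V := (f : V →ₗ[ℂ] V) with he
  by_cases hdiag : ∀ (μ : ℂ) (w : V), (e - μ • 1) ((e - μ • 1) w) = 0 → (e - μ • 1) w = 0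
  · -- diagonalizable case: norms are bounded, contradicting hub
    exfalso
    apply hub
    -- every generalized eigenvector is an eigenvector
    have key : ∀ (μ : ℂ) (k : ℕ), (e.genEigenspace μ) k ≤ e.eigenspace μ := by
      intro μ k
      induction k with
      | zero =>
        intro x hx
        rw [Module.End.mem_genEigenspace_nat] at hx
        simp at hx
        simp [hx]
      | succ m ih =>
        intro x hx
        rw [Module.End.mem_genEigenspace_nat] at hx
        have hx' : ((e - μ • 1) ^ m) ((e - μ • 1) x) = 0 := by
          rw [← Module.End.mul_apply, ← pow_succ]
          exact LinearMap.mem_ker.mp hx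
        have h2 : (e - μ • 1) x ∈ (e.genEigenspace μ) m := by
          rw [Module.End.mem_genEigenspace_nat]; exact hx'
        have h3 := ih h2
        rw [Module.End.mem_eigenspace_iff] at h3
        have h4 : (e - μ • 1) ((e - μ • 1) x) = 0 := by
          have hs : (e - μ • 1) ((e - μ • 1) x) = e ((e - μ • 1) x) - μ • ((e - μ • 1) x) := by
            simp [LinearMap.sub_apply]
          rw [hs, h3, sub_self]
        rw [Module.End.mem_eigenspace_iff]
        have := hdiag μ x h4
        simpa [LinearMap.sub_apply, sub_eq_zero] using this
    have htop : (⨆ μ : ℂ, e.eigenspace μ) = ⊤ := by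
      rw [eq_top_iff, ← Module.End.iSup_maxGenEigenspace_eq_top e]
      apply iSup_mono
      intro μ
      rw [← Module.End.iSup_genEigenspace_eq]
      exact iSup_le fun k => key μ k
    -- pointwise boundedness
    have hpt : ∀ x : V, ∃ C : ℝ, ∀ n : ℤ, ‖((h ^ n : (V →L[ℂ] V)ˣ) : V →L[ℂ] V) x‖ ≤ C := by
      intro x
      have hx : x ∈ ⨆ μ : ℂ, e.eigenspace μ := htop ▸ Submodule.mem_top
      induction hx using Submodule.iSup_induction' with
      | mem μ y hy =>
        rcases eq_or_ne y 0 with rfl | hy0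
        · exact ⟨0, fun n => by simp⟩
        · rw [Module.End.mem_eigenspace_iff] at hy
          have hev : Module.End.HasEigenvalue e μ :=
            Module.End.hasEigenvalue_of_hasEigenvector ⟨Module.End.mem_eigenspace_iff.mpr hy, hy0⟩
          have hμ1 : ‖μ‖ = 1 := heig μ hev
          have hμ0 : μ ≠ 0 := by
            intro hc; rw [hc] at hμ1; simp at hμ1
          refine ⟨‖y‖, fun n => ?_⟩
          have := unit_zpow_eigen h hμ0 (x := y) (μ := μ) hy n
          rw [this, norm_smul, norm_zpow, hμ1, one_zpow, one_mul]
      | zero => exact ⟨0, fun n => by simp⟩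
      | add x y _ _ hx hy =>
        obtain ⟨C₁, hC₁⟩ := hx
        obtain ⟨C₂, hC₂⟩ := hy
        refine ⟨C₁ + C₂, fun n => ?_⟩
        calc ‖((h ^ n : (V →L[ℂ] V)ˣ) : V →L[ℂ] V) (x + y)‖
            ≤ ‖((h ^ n : (V →L[ℂ] V)ˣ) : V →L[ℂ] V) x‖ +
              ‖((h ^ n : (V →L[ℂ] V)ˣ) : V →L[ℂ] V) y‖ := by
              rw [map_add]; exact norm_add_le _ _
          _ ≤ C₁ + C₂ := add_le_add (hC₁ n) (hC₂ n)
    obtain ⟨C', hC'⟩ := banach_steinhaus hpt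
    exact ⟨C', by rintro r ⟨n, rfl⟩; exact hC' n⟩
  · -- non-diagonalizable case: linear growth
    push_neg at hdiag
    obtain ⟨μ, w, h2, h1⟩ := hdiag
    set v : V := (e - μ • 1) w with hv
    have hv0 : v ≠ 0 := h1
    have hfv : f v = μ • v := by
      have : (e - μ • 1) v = 0 := h2
      have := sub_eq_zero.mp (by simpa [LinearMap.sub_apply] using this)
      exact this
    have hfw : f w = μ • w + v := by
      have hvv : v = f w - μ • w := by
        simp [hv, LinearMap.sub_apply, he, ContinuousLinearMap.coe_coe]
      rw [hvv]; abel
    have hev : Module.End.HasEigenvalue e μ :=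
      Module.End.hasEigenvalue_of_hasEigenvector ⟨Module.End.mem_eigenspace_iff.mpr hfv, hv0⟩
    have hμ1 : ‖μ‖ = 1 := heig μ hev
    have hw0 : w ≠ 0 := by
      rintro rfl
      apply hv0
      simp [hv]
    have hnv : 0 < ‖v‖ := norm_pos_iff.mpr hv0
    have hnw : 0 < ‖w‖ := norm_pos_iff.mpr hw0
    -- key formulas
    have hkey : ∀ m : ℕ, (f ^ (m + 1)) w = μ ^ (m + 1) • w + (((m : ℂ) + 1) * μ ^ m) • v := by
      intro m
      induction m with
      | zero => simpa using hfw
      | succ k ih =>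
        have : (f ^ (k + 1 + 1)) w = f ((f ^ (k + 1)) w) := by
          rw [← ContinuousLinearMap.mul_apply, ← pow_succ']
        rw [this, ih, map_add, map_smul, map_smul, hfw, hfv]
        push_cast
        module
    have hfnv : ∀ n : ℕ, (f ^ n) v = μ ^ n • v := by
      intro n
      induction n with
      | zero => simp
      | succ k ih =>
        rw [pow_succ, ContinuousLinearMap.mul_apply, hfv, map_smul, ih, smul_smul,
          ← pow_succ']
    refine ⟨‖v‖ / (2 * ‖w‖), by positivity, fun n hn => ?_⟩
    have hcoe : ((h ^ (n : ℤ) : (V →L[ℂ] V)ˣ) : V →L[ℂ] V) = f ^ n := by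
      rw [zpow_natCast, Units.val_pow_eq_pow_val]
    rw [hcoe]
    have hone : (1 : ℝ) ≤ ‖f ^ n‖ := by
      have hle := (f ^ n).le_opNorm v
      rw [hfnv n, norm_smul, norm_pow, hμ1, one_pow, one_mul] at hle
      exact le_of_mul_le_mul_right (by simpa using hle) hnv
    by_cases hsmall : (n : ℝ) * ‖v‖ ≤ 2 * ‖w‖
    · calc ‖v‖ / (2 * ‖w‖) * n = (n : ℝ) * ‖v‖ / (2 * ‖w‖) := by ring
        _ ≤ 1 := by rw [div_le_one (by positivity)]; exact hsmall
        _ ≤ ‖f ^ n‖ := hone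
    · push_neg at hsmall
      obtain ⟨m, rfl⟩ : ∃ m : ℕ, n = m + 1 := ⟨n - 1, by omega⟩
      have hle := (f ^ (m + 1)).le_opNorm w
      rw [hkey m] at hle
      have hlow : ((m : ℝ) + 1) * ‖v‖ - ‖w‖ ≤ ‖(f ^ (m + 1)) w‖ := by
        have h5 : ‖(((m : ℂ) + 1) * μ ^ m) • v‖ = ((m : ℝ) + 1) * ‖v‖ := by
          rw [norm_smul, norm_mul, norm_pow, hμ1, one_pow, mul_one]
          congr 1
          rw [show ((m : ℂ) + 1) = ((m + 1 : ℕ) : ℂ) by push_cast; ring]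
          rw [Complex.norm_natCast]; push_cast; ring
        have h6 : ‖μ ^ (m + 1) • w‖ = ‖w‖ := by
          rw [norm_smul, norm_pow, hμ1, one_pow, one_mul]
        have ht : ‖(((m : ℂ) + 1) * μ ^ m) • v‖ ≤
            ‖μ ^ (m + 1) • w + (((m : ℂ) + 1) * μ ^ m) • v‖ + ‖μ ^ (m + 1) • w‖ := by
          have hta := norm_add_le
            (μ ^ (m + 1) • w + (((m : ℂ) + 1) * μ ^ m) • v) (-(μ ^ (m + 1) • w))
          simpa [add_comm, add_left_comm] using hta
        rw [hkey m]
        rw [h5, h6] at ht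
        linarith
      have hn2 : ((m : ℝ) + 1) * ‖v‖ / 2 ≤ ((m : ℝ) + 1) * ‖v‖ - ‖w‖ := by
        have : ‖w‖ ≤ ((m : ℝ) + 1) * ‖v‖ / 2 := by
          have : 2 * ‖w‖ < ((m : ℝ) + 1) * ‖v‖ := by push_cast at hsmall ⊢; linarith
          linarith
        linarith
      have hfinal : ((m : ℝ) + 1) * ‖v‖ / 2 ≤ ‖f ^ (m + 1)‖ * ‖w‖ := by
        calc ((m : ℝ) + 1) * ‖v‖ / 2 ≤ ((m : ℝ) + 1) * ‖v‖ - ‖w‖ := hn2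
          _ ≤ ‖(f ^ (m + 1)) w‖ := hlow
          _ ≤ ‖f ^ (m + 1)‖ * ‖w‖ := (f ^ (m + 1)).le_opNorm w
      rw [div_mul_eq_mul_div, div_le_iff₀ (by positivity)]
      calc ‖v‖ * ((m : ℕ) + 1 : ℕ) ≤ ‖v‖ * ((m : ℝ) + 1) := by push_cast; ring_nf; linarith
        _ = ((m : ℝ) + 1) * ‖v‖ := by ring
        _ ≤ 2 * (((m : ℝ) + 1) * ‖v‖ / 2) := by ring_nf; linarith [hn2]
        _ ≤ 2 * (‖f ^ (m + 1)‖ * ‖w‖) := by linarith [hfinal]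
        _ = ‖f ^ (m + 1)‖ * (2 * ‖w‖) := by ring
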